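/- Let H be a uniformly random m × n matrix over F_q, A ⊂ {1,...,n} with |A| = s, and H_A the m × s submatrix of columns indexed by A. Then for integers j, r with 0 ≤ j ≤ n and max(0, s-n+j) ≤ r ≤ min(j,s), the probability that rk(H) = j and rk(H_A) = r equals q^{-m(n-j)+r(n-j-s+r)} · ψ_m(j) · [s choose r]_q · [n-s choose j-r]_q. -/

import Mathlib

/-- `ψ_m(j) = ∏_{k=0}^{j-1} (1 - q^{k-m})`. -/
noncomputable def psi (q : ℝ) (m j : ℕ) : ℝ :=
  ∏ k ∈ Finset.range j, (1 - q ^ ((k : ℤ) - (m : ℤ)))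

/-- The Gaussian binomial coefficient `[n choose j]_q`. -/
noncomputable def gaussBinom (q : ℝ) (n j : ℕ) : ℝ :=
  ∏ k ∈ Finset.range j, (1 - q ^ (n - j + k + 1)) / (1 - q ^ (k + 1))

open Finset Submodule Set Module Matrix

noncomputable def Cq (Q : ℝ) (m t d : ℕ) : ℝ :=
  ∏ i ∈ Finset.range d, ((Q ^ m - Q ^ i) * (Q ^ t - Q ^ i) / (Q ^ d - Q ^ i))

lemma nat_card_sigma {ι : Type} [Fintype ι] (f : ι → Type) [∀ i, Finite (f i)] :
    Nat.card (Σ i, f i) = ∑ i : ι, Nat.card (f i) := by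
  classical
  haveI := fun i => Fintype.ofFinite (f i)
  rw [Nat.card_eq_fintype_card, Fintype.card_sigma]
  exact Finset.sum_congr rfl fun i _ => (Nat.card_eq_fintype_card).symm

def prodSubtypeSigmaEquiv {β₁ β₂ : Type} (P : β₁ → Prop) (Q : β₁ → β₂ → Prop) :
    {p : β₁ × β₂ // Q p.1 p.2 ∧ P p.1} ≃ Σ x : {a // P a}, {b // Q x.1 b} :=
  ⟨fun p => ⟨⟨p.1.1, p.2.2⟩, ⟨p.1.2, p.2.1⟩⟩, fun x => ⟨(x.1.1, x.2.1), ⟨x.2.2, x.1.2⟩⟩,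
    fun _ => rfl, fun _ => rfl⟩

section Counting

variable {F : Type} [Field F] [Fintype F]

local notation "q" => Fintype.card F

variable {V : Type} [AddCommGroup V] [Module F V] [Finite V]

/-- Real-valued count of linearly independent tuples, valid for all `d`. -/
lemma card_linIndep_real (d : ℕ) :
    (Nat.card {b : Fin d → V // LinearIndependent F b} : ℝ)
      = ∏ i ∈ Finset.range d, ((q : ℝ) ^ (finrank F V) - (q : ℝ) ^ i) := by
  by_cases hk : d ≤ finrank F V
  · rw [card_linearIndependent hk, Nat.cast_prod,
      Fin.prod_univ_eq_prod_range (fun i => ((q ^ finrank F V - q ^ i : ℕ) : ℝ)) d]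
    refine Finset.prod_congr rfl fun i hi => ?_
    rw [Nat.cast_sub (Nat.pow_le_pow_right Fintype.card_pos
      (le_trans (le_of_lt (Finset.mem_range.mp hi)) hk))]
    push_cast
    ring
  · have he : IsEmpty {b : Fin d → V // LinearIndependent F b} := by
      constructor
      rintro ⟨b, hb⟩
      exact hk (by simpa using hb.fintype_card_le_finrank)
    rw [Nat.card_of_isEmpty]
    rw [eq_comm]
    push_cast
    refine Finset.prod_eq_zero (Finset.mem_range.mpr (lt_of_not_ge hk)) ?_
    ring

lemma span_top_iff_transpose {t d : ℕ} (w : Fin t → (Fin d → F)) :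
    span F (Set.range w) = ⊤ ↔ LinearIndependent F (fun i k => w k i) := by
  classical
  let N : Matrix (Fin t) (Fin d) F := Matrix.of w
  have hr1 : Nᵀ.rank = finrank F (span F (Set.range w)) := by
    rw [Matrix.rank_eq_finrank_span_cols]
    rfl
  have hr2 : N.rank = finrank F (span F (Set.range (fun i k => w k i))) := by
    rw [Matrix.rank_eq_finrank_span_cols]
    rfl
  constructor
  · intro h
    rw [linearIndependent_iff_card_eq_finrank_span]
    have : finrank F (span F (Set.range w)) = d := by
      rw [h, finrank_top, finrank_fintype_fun_eq_card, Fintype.card_fin]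
    rw [Set.finrank, ← hr2, ← Matrix.rank_transpose, hr1, this, Fintype.card_fin]
  · intro h
    have hd : finrank F (span F (Set.range w)) = d := by
      rw [← hr1, Matrix.rank_transpose, hr2, ← Set.finrank,
        ← linearIndependent_iff_card_eq_finrank_span.mp h, Fintype.card_fin]
    apply Submodule.eq_top_of_finrank_eq
    rw [hd, finrank_fintype_fun_eq_card, Fintype.card_fin]

omit [Fintype F] [Finite V] in
lemma span_range_comp_equiv {U' : Type} [AddCommGroup U'] [Module F U'] (e : V ≃ₗ[F] U')
    {t : ℕ} (w : Fin t → V) :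
    span F (Set.range (fun k => e (w k))) = (span F (Set.range w)).map (e : V →ₗ[F] U') := by
  rw [Submodule.map_span]
  congr 1
  rw [← Set.range_comp]
  rfl

omit [Fintype F] [Finite V] in
lemma card_span_cond_equiv {U' : Type} [AddCommGroup U'] [Module F U'] (e : V ≃ₗ[F] U')
    (t : ℕ) (P : Submodule F U' → Prop) :
    Nat.card {w : Fin t → V // P ((span F (Set.range w)).map (e : V →ₗ[F] U'))}
      = Nat.card {w : Fin t → U' // P (span F (Set.range w))} := by
  apply Nat.card_congr
  refine Equiv.subtypeEquiv (Equiv.arrowCongr (Equiv.refl (Fin t)) e.toEquiv) fun w => ?_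
  rw [show span F (Set.range (Equiv.arrowCongr (Equiv.refl (Fin t)) e.toEquiv w))
      = (span F (Set.range w)).map (e : V →ₗ[F] U') from span_range_comp_equiv e w]

lemma card_span_top {t : ℕ} {U : Type} [AddCommGroup U] [Module F U] [Finite U]
    {d : ℕ} (hd : finrank F U = d) (hdt : d ≤ t) :
    (Nat.card {w : Fin t → U // span F (Set.range w) = ⊤} : ℝ)
      = ∏ i ∈ Finset.range d, ((q : ℝ) ^ t - (q : ℝ) ^ i) := by
  have he : Nonempty (U ≃ₗ[F] (Fin d → F)) := by
    apply FiniteDimensional.nonempty_linearEquiv_of_finrank_eq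
    rw [hd, finrank_fintype_fun_eq_card, Fintype.card_fin]
  obtain ⟨e⟩ := he
  have h1 : Nat.card {w : Fin t → U // span F (Set.range w) = ⊤}
      = Nat.card {w : Fin t → (Fin d → F) // span F (Set.range w) = ⊤} := by
    rw [← card_span_cond_equiv e t (· = ⊤)]
    apply Nat.card_congr
    apply Equiv.subtypeEquivRight
    intro w
    constructor
    · intro h
      rw [h, Submodule.map_top, LinearEquiv.range]
    · intro h
      apply Submodule.map_injective_of_injective (f := (e : U →ₗ[F] Fin d → F)) e.injective
      rw [h, Submodule.map_top, LinearEquiv.range]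
  rw [h1]
  have h2 : Nat.card {w : Fin t → (Fin d → F) // span F (Set.range w) = ⊤}
      = Nat.card {v : Fin d → (Fin t → F) // LinearIndependent F v} := by
    apply Nat.card_congr
    exact (Equiv.piComm (fun _ _ => F)).subtypeEquiv fun w => span_top_iff_transpose w
  rw [h2, card_linIndep_real]
  rw [finrank_fintype_fun_eq_card, Fintype.card_fin]

lemma card_span_eq {t : ℕ} (U : Submodule F V) {d : ℕ} (hd : finrank F ↥U = d) (hdt : d ≤ t) :
    (Nat.card {w : Fin t → V // span F (Set.range w) = U} : ℝ)
      = ∏ i ∈ Finset.range d, ((q : ℝ) ^ t - (q : ℝ) ^ i) := by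
  rw [← card_span_top (F := F) hd hdt]
  have hc : Nat.card {w : Fin t → V // span F (Set.range w) = U}
      = Nat.card {w' : Fin t → ↥U // span F (Set.range w') = ⊤} := by
    apply Nat.card_congr
    refine ⟨fun w => ⟨fun k => ⟨w.1 k, by
        have := Submodule.subset_span (R := F) (Set.mem_range_self (f := w.1) k)
        rwa [w.2] at this⟩, ?_⟩,
      fun w' => ⟨fun k => (w'.1 k : V), ?_⟩, fun w => by ext k; rfl, fun w' => by ext k; rfl⟩
    · -- span of lifted family is ⊤
      apply Submodule.map_injective_of_injective U.injective_subtype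
      rw [Submodule.map_span, Submodule.map_top, Submodule.range_subtype, ← Set.range_comp]
      exact w.2
    · rw [show (Set.range fun k => ((w'.1 k : V))) = Set.range (U.subtype ∘ w'.1) from rfl,
        Set.range_comp, ← Submodule.map_span, w'.2, Submodule.map_top,
        Submodule.range_subtype]
  rw [hc]

lemma card_linIndep_span_eq {d : ℕ} (U : Submodule F V) (hU : finrank F ↥U = d) :
    (Nat.card {b : Fin d → V // LinearIndependent F b ∧ U = span F (Set.range b)} : ℝ)
      = ∏ i ∈ Finset.range d, ((q : ℝ) ^ d - (q : ℝ) ^ i) := by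
  have hc : Nat.card {b : Fin d → V // LinearIndependent F b ∧ U = span F (Set.range b)}
      = Nat.card {b' : Fin d → ↥U // LinearIndependent F b'} := by
    apply Nat.card_congr
    refine ⟨fun b => ⟨fun i => ⟨b.1 i, by
        have := Submodule.subset_span (R := F) (Set.mem_range_self (f := b.1) i)
        rwa [← b.2.2] at this⟩, ?_⟩,
      fun b' => ⟨fun i => (b'.1 i : V), ?_, ?_⟩, fun b => by ext i; rfl, fun b' => by ext i; rfl⟩
    · exact LinearIndependent.of_comp U.subtype b.2.1
    · exact b'.2.map' U.subtype U.ker_subtype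
    · -- U = span of coerced family
      have hli : LinearIndependent F (fun i => ((b'.1 i : V))) := b'.2.map' U.subtype U.ker_subtype
      have hle : span F (Set.range fun i => ((b'.1 i : V))) ≤ U := by
        rw [Submodule.span_le]
        rintro - ⟨i, rfl⟩
        exact (b'.1 i).2
      have hfr : finrank F ↥(span F (Set.range fun i => ((b'.1 i : V)))) = finrank F ↥U := by
        rw [finrank_span_eq_card hli, Fintype.card_fin, hU]
      exact (Submodule.eq_of_le_of_finrank_eq hle hfr).symm
  rw [hc]
  rw [card_linIndep_real (F := F) d, hU]

lemma card_cnt (t d : ℕ) (hdt : d ≤ t) :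
    (Nat.card {w : Fin t → V // finrank F (span F (Set.range w)) = d} : ℝ)
      = Cq q (finrank F V) t d := by
  classical
  set X := {w : Fin t → V // finrank F (span F (Set.range w)) = d} with hX
  set Y := {b : Fin d → V // LinearIndependent F b} with hY
  set P := {p : (Fin t → V) × (Fin d → V) //
    LinearIndependent F p.2 ∧ span F (Set.range p.1) = span F (Set.range p.2)} with hP
  have hfr_of : ∀ (b : Fin d → V), LinearIndependent F b →
      finrank F ↥(span F (Set.range b)) = d := fun b hb => by
    rw [finrank_span_eq_card hb, Fintype.card_fin]
  -- equiv 1 : P ≃ Σ x : X, fiber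
  have e1 : P ≃ Σ x : X, {b : Fin d → V // LinearIndependent F b ∧
      span F (Set.range x.1) = span F (Set.range b)} := by
    refine ⟨fun p => ⟨⟨p.1.1, by rw [p.2.2]; exact hfr_of p.1.2 p.2.1⟩, ⟨p.1.2, p.2.1, p.2.2⟩⟩,
      fun x => ⟨(x.1.1, x.2.1), x.2.2.1, x.2.2.2⟩, fun p => rfl, fun x => rfl⟩
  -- equiv 2 : P ≃ Σ y : Y, fiber
  have e2 : P ≃ Σ y : Y, {w : Fin t → V // span F (Set.range w) = span F (Set.range y.1)} := by
    refine ⟨fun p => ⟨⟨p.1.2, p.2.1⟩, ⟨p.1.1, p.2.2⟩⟩,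
      fun y => ⟨(y.2.1, y.1.1), y.1.2, y.2.2⟩, fun p => rfl, fun y => rfl⟩
  haveI : Fintype X := Fintype.ofFinite X
  haveI : Fintype Y := Fintype.ofFinite Y
  have h1 : (Nat.card P : ℝ)
      = (Nat.card X : ℝ) * ∏ i ∈ Finset.range d, ((q : ℝ) ^ d - (q : ℝ) ^ i) := by
    rw [Nat.card_congr e1, nat_card_sigma, Nat.cast_sum]
    have : ∀ x : X, (Nat.card {b : Fin d → V // LinearIndependent F b ∧
        span F (Set.range x.1) = span F (Set.range b)} : ℝ)
        = ∏ i ∈ Finset.range d, ((q : ℝ) ^ d - (q : ℝ) ^ i) := fun x =>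
      card_linIndep_span_eq (span F (Set.range x.1)) x.2
    rw [Finset.sum_congr rfl fun x _ => this x, Finset.sum_const, Finset.card_univ,
      nsmul_eq_mul, Nat.card_eq_fintype_card]
  have h2 : (Nat.card P : ℝ)
      = (Nat.card Y : ℝ) * ∏ i ∈ Finset.range d, ((q : ℝ) ^ t - (q : ℝ) ^ i) := by
    rw [Nat.card_congr e2, nat_card_sigma, Nat.cast_sum]
    have : ∀ y : Y, (Nat.card {w : Fin t → V // span F (Set.range w)
        = span F (Set.range y.1)} : ℝ)
        = ∏ i ∈ Finset.range d, ((q : ℝ) ^ t - (q : ℝ) ^ i) := fun y =>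
      card_span_eq (span F (Set.range y.1)) (hfr_of y.1 y.2) hdt
    rw [Finset.sum_congr rfl fun y _ => this y, Finset.sum_const, Finset.card_univ,
      nsmul_eq_mul, Nat.card_eq_fintype_card]
  have hY1 : (Nat.card Y : ℝ) = ∏ i ∈ Finset.range d, ((q : ℝ) ^ (finrank F V) - (q : ℝ) ^ i) :=
    card_linIndep_real d
  have hq2 : (2 : ℝ) ≤ (q : ℝ) := by exact_mod_cast Fintype.one_lt_card
  have hne : ∏ i ∈ Finset.range d, ((q : ℝ) ^ d - (q : ℝ) ^ i) ≠ 0 := by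
    apply Finset.prod_ne_zero_iff.mpr
    intro i hi
    have : (q : ℝ) ^ i < (q : ℝ) ^ d :=
      pow_lt_pow_right₀ (by linarith) (Finset.mem_range.mp hi)
    linarith
  have key : (Nat.card X : ℝ) * ∏ i ∈ Finset.range d, ((q : ℝ) ^ d - (q : ℝ) ^ i)
      = (∏ i ∈ Finset.range d, ((q : ℝ) ^ (finrank F V) - (q : ℝ) ^ i))
        * ∏ i ∈ Finset.range d, ((q : ℝ) ^ t - (q : ℝ) ^ i) := by
    rw [← h1, h2, hY1]
  rw [Cq, Finset.prod_div_distrib, Finset.prod_mul_distrib, eq_div_iff hne]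
  exact key

omit [Fintype F] [Finite V] in
lemma finrank_sup_eq [FiniteDimensional F V] (W S : Submodule F V) :
    finrank F ↥(W ⊔ S) = finrank F ↥W + finrank F ↥(S.map W.mkQ) := by
  set f := W.mkQ.comp (W ⊔ S).subtype with hf
  have hker : LinearMap.ker f = Submodule.comap (W ⊔ S).subtype W := by
    rw [hf, LinearMap.ker_comp, Submodule.ker_mkQ]
  have hrange : LinearMap.range f = S.map W.mkQ := by
    rw [hf, LinearMap.range_comp, Submodule.range_subtype, Submodule.map_sup,
      Submodule.mkQ_map_self, bot_sup_eq]
  have hrn := LinearMap.finrank_range_add_finrank_ker f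
  rw [hrange, hker] at hrn
  have hk : finrank F ↥(Submodule.comap (W ⊔ S).subtype W) = finrank F ↥W :=
    (Submodule.comapSubtypeEquivOfLe le_sup_left).finrank_eq
  rw [hk] at hrn
  omega

lemma card_rel (W : Submodule F V) (t j : ℕ) (hrj : finrank F ↥W ≤ j) :
    (Nat.card {w : Fin t → V // finrank F ↥(W ⊔ span F (Set.range w)) = j} : ℝ)
      = (q : ℝ) ^ (finrank F ↥W * t) *
        (Nat.card {u : Fin t → V ⧸ W // finrank F (span F (Set.range u)) = j - finrank F ↥W} : ℝ) := by
  classical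
  set r := finrank F ↥W with hr
  -- rewrite the condition
  have hcond : ∀ w : Fin t → V, finrank F ↥(W ⊔ span F (Set.range w)) = j
      ↔ finrank F ↥(span F (Set.range (W.mkQ ∘ w))) = j - r := by
    intro w
    have h1 : finrank F ↥(W ⊔ span F (Set.range w))
        = r + finrank F ↥((span F (Set.range w)).map W.mkQ) := finrank_sup_eq W _
    have h2 : (span F (Set.range w)).map W.mkQ = span F (Set.range (W.mkQ ∘ w)) := by
      rw [Submodule.map_span, Set.range_comp]
    rw [h1, h2]
    omega
  rw [Nat.card_congr (Equiv.subtypeEquivRight hcond)]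
  -- section of mkQ
  obtain ⟨σ, hσ⟩ := W.mkQ.exists_rightInverse_of_surjective (Submodule.range_mkQ W)
  have hσ' : ∀ x : V ⧸ W, W.mkQ (σ x) = x := fun x => by
    rw [← LinearMap.comp_apply, hσ, LinearMap.id_apply]
  have hmem : ∀ v : V, v - σ (W.mkQ v) ∈ W := fun v => by
    have h0 : W.mkQ (v - σ (W.mkQ v)) = 0 := by rw [map_sub, hσ', sub_self]
    rwa [Submodule.mkQ_apply, Submodule.Quotient.mk_eq_zero] at h0
  have hzero : ∀ a : ↥W, W.mkQ (a : V) = 0 := fun a => by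
    rw [Submodule.mkQ_apply, Submodule.Quotient.mk_eq_zero]
    exact a.2
  have e : {w : Fin t → V // finrank F ↥(span F (Set.range (W.mkQ ∘ w))) = j - r}
      ≃ (Fin t → ↥W) × {u : Fin t → V ⧸ W // finrank F (span F (Set.range u)) = j - r} := by
    refine ⟨fun w => ⟨fun k => ⟨w.1 k - σ (W.mkQ (w.1 k)), hmem _⟩,
        ⟨fun k => W.mkQ (w.1 k), w.2⟩⟩,
      fun p => ⟨fun k => (p.1 k : V) + σ (p.2.1 k), ?_⟩, fun w => ?_, fun p => ?_⟩
    · have heq : (W.mkQ ∘ fun k => (p.1 k : V) + σ (p.2.1 k)) = p.2.1 := by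
        funext k
        simp only [Function.comp_apply, map_add, hσ']
        rw [hzero, zero_add]
      rw [heq]
      exact p.2.2
    · apply Subtype.ext
      funext k
      simp
    · apply Prod.ext
      · funext k
        apply Subtype.ext
        have hq : W.mkQ ((p.1 k : V) + σ (p.2.1 k)) = p.2.1 k := by
          rw [map_add, hσ', hzero, zero_add]
        show ((p.1 k : V) + σ (p.2.1 k)) - σ (W.mkQ ((p.1 k : V) + σ (p.2.1 k))) = (p.1 k : V)
        rw [hq]
        abel
      · apply Subtype.ext
        funext k
        show W.mkQ ((p.1 k : V) + σ (p.2.1 k)) = p.2.1 k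
        rw [map_add, hσ', hzero, zero_add]
  rw [Nat.card_congr e, Nat.card_prod, Nat.cast_mul]
  congr 1
  rw [Nat.card_fun, Nat.card_eq_fintype_card (α := Fin t), Fintype.card_fin]
  haveI : Fintype ↥W := Fintype.ofFinite ↥W
  rw [Nat.card_eq_fintype_card (α := ↥W), card_eq_pow_finrank (K := F) (V := ↥W)]
  push_cast
  rw [← pow_mul]

end Counting

section Algebra

variable {Q : ℝ} (hQ : 2 ≤ Q)
include hQ

lemma hQ0 : (0:ℝ) < Q := by linarith
lemma hQne : Q ≠ 0 := by linarith
lemma hQ1 : (1:ℝ) < Q := by linarith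

lemma gauss_eq {t d : ℕ} (hdt : d ≤ t) :
    ∏ i ∈ Finset.range d, ((Q ^ t - Q ^ i) / (Q ^ d - Q ^ i)) = gaussBinom Q t d := by
  rw [gaussBinom, ← Finset.prod_range_reflect]
  refine Finset.prod_congr rfl fun k hk => ?_
  have hk' : k < d := Finset.mem_range.mp hk
  set i := d - 1 - k with hi
  have hid : i < d := by omega
  have h1 : Q ^ t = Q ^ (t - i) * Q ^ i := by rw [← pow_add]; congr 1; omega
  have h2 : Q ^ d = Q ^ (d - i) * Q ^ i := by rw [← pow_add]; congr 1; omega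
  have hti : t - i = t - d + k + 1 := by omega
  have hdi : d - i = k + 1 := by omega
  rw [h1, h2, hti, hdi]
  have hne1 : Q ^ (t - d + k + 1) * Q ^ i - Q ^ i ≠ 0 := by
    have hgt : (1:ℝ) < Q ^ (t - d + k + 1) := one_lt_pow₀ (hQ1 hQ) (by omega)
    have hpos : (0:ℝ) < Q ^ i := pow_pos (hQ0 hQ) i
    nlinarith
  have hne2 : Q ^ (k + 1) * Q ^ i - Q ^ i ≠ 0 := by
    have hgt : (1:ℝ) < Q ^ (k + 1) := one_lt_pow₀ (hQ1 hQ) (by omega)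
    have hpos : (0:ℝ) < Q ^ i := pow_pos (hQ0 hQ) i
    nlinarith
  have hne3 : 1 - Q ^ (k + 1) ≠ 0 := by
    have hgt : (1:ℝ) < Q ^ (k + 1) := one_lt_pow₀ (hQ1 hQ) (by omega)
    linarith
  rw [div_eq_div_iff hne2 hne3]
  ring

lemma prod_pow_sub_eq {m' d : ℕ} :
    ∏ i ∈ Finset.range d, (Q ^ m' - Q ^ i) = Q ^ (m' * d) * psi Q m' d := by
  have hterm : ∀ i : ℕ, Q ^ m' - Q ^ i = Q ^ m' * (1 - Q ^ ((i : ℤ) - (m' : ℤ))) := by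
    intro i
    have : Q ^ m' * Q ^ ((i : ℤ) - (m' : ℤ)) = Q ^ i := by
      rw [← zpow_natCast Q m', ← zpow_add₀ (hQne hQ), ← zpow_natCast Q i]
      congr 1
      ring
    rw [mul_sub, mul_one, this]
  rw [Finset.prod_congr rfl fun i _ => hterm i, Finset.prod_mul_distrib, Finset.prod_const,
    Finset.card_range, ← pow_mul, psi]

lemma Cq_eq {m' t d : ℕ} (hdt : d ≤ t) :
    Cq Q m' t d = Q ^ (m' * d) * psi Q m' d * gaussBinom Q t d := by
  rw [Cq]
  have : ∀ i ∈ Finset.range d, (Q ^ m' - Q ^ i) * (Q ^ t - Q ^ i) / (Q ^ d - Q ^ i)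
      = (Q ^ m' - Q ^ i) * ((Q ^ t - Q ^ i) / (Q ^ d - Q ^ i)) := fun i _ => mul_div_assoc _ _ _
  rw [Finset.prod_congr rfl this, Finset.prod_mul_distrib, prod_pow_sub_eq hQ, gauss_eq hQ hdt]

omit hQ in
lemma psi_merge {m r j : ℕ} (hrm : r ≤ m) (hrj : r ≤ j) :
    psi Q m r * psi Q (m - r) (j - r) = psi Q m j := by
  obtain ⟨d, rfl⟩ : ∃ d, j = r + d := ⟨j - r, by omega⟩
  rw [Nat.add_sub_cancel_left]
  rw [psi, psi, psi, Finset.prod_range_add]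
  congr 1
  refine Finset.prod_congr rfl fun k _ => ?_
  congr 2
  push_cast [Nat.cast_sub hrm]
  ring

omit hQ in
lemma psi_zero_of_lt {m j : ℕ} (hmj : m < j) : psi Q m j = 0 := by
  rw [psi]
  apply Finset.prod_eq_zero (Finset.mem_range.mpr hmj)
  simp

lemma algebra_final (m n s j r : ℕ)
    (hj : j ≤ n) (hr1 : s + j ≤ n + r) (hr2 : r ≤ min j s) :
    Cq Q m s r * ((Q : ℝ) ^ (r * (n - s)) * Cq Q (m - r) (n - s) (j - r)) / Q ^ (m * n)
      = Q ^ (-(m : ℤ) * ((n : ℤ) - (j : ℤ))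
            + (r : ℤ) * ((n : ℤ) - (j : ℤ) - (s : ℤ) + (r : ℤ)))
          * psi Q m j * gaussBinom Q s r * gaussBinom Q (n - s) (j - r) := by
  have hrj : r ≤ j := le_trans hr2 (min_le_left _ _)
  have hrs : r ≤ s := le_trans hr2 (min_le_right _ _)
  have hsn : s ≤ n := by omega
  have hd2 : j - r ≤ n - s := by omega
  rw [Cq_eq hQ hrs, Cq_eq hQ hd2]
  rw [div_eq_iff (by positivity : (Q:ℝ) ^ (m*n) ≠ 0)]
  by_cases hrm : r ≤ m
  · rw [← psi_merge hrm hrj]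
    have hpow : Q ^ (m * r) * (Q ^ (r * (n - s)) * Q ^ ((m - r) * (j - r)))
        = Q ^ (-(m : ℤ) * ((n : ℤ) - (j : ℤ))
            + (r : ℤ) * ((n : ℤ) - (j : ℤ) - (s : ℤ) + (r : ℤ))) * Q ^ (m * n) := by
      rw [← zpow_natCast Q (m * r), ← zpow_natCast Q (r * (n - s)),
        ← zpow_natCast Q ((m - r) * (j - r)), ← zpow_natCast Q (m * n),
        ← zpow_add₀ (hQne hQ), ← zpow_add₀ (hQne hQ), ← zpow_add₀ (hQne hQ)]
      congr 1
      push_cast [Nat.cast_sub hrm, Nat.cast_sub hrj, Nat.cast_sub hsn]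
      ring
    linear_combination (psi Q m r * psi Q (m - r) (j - r) * gaussBinom Q s r
      * gaussBinom Q (n - s) (j - r)) * hpow
  · rw [psi_zero_of_lt (by omega : m < r), psi_zero_of_lt (by omega : m < j)]
    ring

end Algebra

/-- For a uniformly random `m × n` matrix `H` over `F_q`, `A ⊆ [n]` with `|A| = s`, and
`H_A` the submatrix of columns indexed by `A`: for `0 ≤ j ≤ n` and
`max(0, s-n+j) ≤ r ≤ min(j,s)`, the probability that `rk(H) = j` and `rk(H_A) = r`
equals `q^{-m(n-j)+r(n-j-s+r)} ψ_m(j) [s choose r]_q [n-s choose j-r]_q`. -/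
theorem stmt_2 (q m n s j r : ℕ) (F : Type) [Field F] [Fintype F]
    (hq : Fintype.card F = q) (A : Finset (Fin n)) (hA : A.card = s)
    (hj : j ≤ n) (hr1 : s + j ≤ n + r) (hr2 : r ≤ min j s) :
    (Nat.card {H : Matrix (Fin m) (Fin n) F //
        H.rank = j ∧ (H.submatrix id ((↑) : A → Fin n)).rank = r} : ℝ)
        / (q : ℝ) ^ (m * n)
      = (q : ℝ) ^ (-(m : ℤ) * ((n : ℤ) - (j : ℤ))
            + (r : ℤ) * ((n : ℤ) - (j : ℤ) - (s : ℤ) + (r : ℤ)))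
          * psi q m j * gaussBinom q s r * gaussBinom q (n - s) (j - r) := by
  classical
  subst hq
  have hQ : (2 : ℝ) ≤ (Fintype.card F : ℝ) := by exact_mod_cast Fintype.one_lt_card (α := F)
  have hrj : r ≤ j := le_trans hr2 (min_le_left _ _)
  have hrs : r ≤ s := le_trans hr2 (min_le_right _ _)
  have hsn : s ≤ n := by omega
  have hd2 : j - r ≤ n - s := by omega
  have hfrV : finrank F (Fin m → F) = m := by
    rw [finrank_fintype_fun_eq_card, Fintype.card_fin]
  set cA : (↥A : Type) → Fin n := ((↑) : A → Fin n) with hcA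
  set cB : {x : Fin n // x ∉ A} → Fin n := Subtype.val with hcB
  have eA : (↥A : Type) ≃ Fin s := A.equivFin.trans (finCongr hA)
  have eB : {x : Fin n // x ∉ A} ≃ Fin (n - s) := by
    apply Fintype.equivFinOfCardEq
    rw [Fintype.card_subtype_compl, Fintype.card_fin, Fintype.card_coe, hA]
  -- step 0 : transpose
  have e0 : {H : Matrix (Fin m) (Fin n) F // H.rank = j ∧ (H.submatrix id cA).rank = r}
      ≃ {w : Fin n → (Fin m → F) // finrank F (span F (Set.range w)) = j
          ∧ finrank F (span F (Set.range (w ∘ cA))) = r} := by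
    refine Equiv.subtypeEquiv ⟨fun H => Hᵀ, fun w => (Matrix.of w)ᵀ, fun _ => rfl, fun _ => rfl⟩
      fun H => ?_
    rw [Matrix.rank_eq_finrank_span_cols, Matrix.rank_eq_finrank_span_cols]
    exact Iff.rfl
  -- split of the span
  have hsplit : ∀ w : Fin n → (Fin m → F), span F (Set.range w)
      = span F (Set.range (w ∘ cA)) ⊔ span F (Set.range (w ∘ cB)) := by
    intro w
    rw [← Submodule.span_union]
    congr 1
    ext x
    constructor
    · rintro ⟨k, rfl⟩
      by_cases hk : k ∈ A
      · exact Or.inl ⟨⟨k, hk⟩, rfl⟩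
      · exact Or.inr ⟨⟨k, hk⟩, rfl⟩
    · rintro (⟨a, rfl⟩ | ⟨b, rfl⟩)
      · exact ⟨cA a, rfl⟩
      · exact ⟨cB b, rfl⟩
  -- step 1 : split into two families
  have e1 : {w : Fin n → (Fin m → F) // finrank F (span F (Set.range w)) = j
          ∧ finrank F (span F (Set.range (w ∘ cA))) = r}
      ≃ {p : ((↥A : Type) → (Fin m → F)) × ({x : Fin n // x ∉ A} → (Fin m → F)) //
          finrank F ↥(span F (Set.range p.1) ⊔ span F (Set.range p.2)) = j
          ∧ finrank F (span F (Set.range p.1)) = r} := by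
    refine Equiv.subtypeEquiv
      (((Equiv.sumCompl (· ∈ A)).arrowCongr (Equiv.refl (Fin m → F))).symm.trans
        (Equiv.sumArrowEquivProdArrow _ _ _)) fun w => ?_
    rw [hsplit w]
    exact Iff.rfl
  -- step 2 : reindex by Fin s and Fin (n-s)
  have e2 : {p : ((↥A : Type) → (Fin m → F)) × ({x : Fin n // x ∉ A} → (Fin m → F)) //
          finrank F ↥(span F (Set.range p.1) ⊔ span F (Set.range p.2)) = j
          ∧ finrank F (span F (Set.range p.1)) = r}
      ≃ {p : (Fin s → (Fin m → F)) × (Fin (n - s) → (Fin m → F)) //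
          finrank F ↥(span F (Set.range p.1) ⊔ span F (Set.range p.2)) = j
          ∧ finrank F (span F (Set.range p.1)) = r} := by
    refine Equiv.subtypeEquiv
      (Equiv.prodCongr (Equiv.arrowCongr eA (Equiv.refl _)) (Equiv.arrowCongr eB (Equiv.refl _)))
      fun p => ?_
    have h1 : Set.range ((Equiv.arrowCongr eA (Equiv.refl (Fin m → F))) p.1) = Set.range p.1 := by
      apply Function.Surjective.range_comp eA.symm.surjective
    have h2 : Set.range ((Equiv.arrowCongr eB (Equiv.refl (Fin m → F))) p.2) = Set.range p.2 := by
      apply Function.Surjective.range_comp eB.symm.surjective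
    rw [show ((Equiv.prodCongr (Equiv.arrowCongr eA (Equiv.refl _))
        (Equiv.arrowCongr eB (Equiv.refl _))) p).1
      = (Equiv.arrowCongr eA (Equiv.refl _)) p.1 from rfl,
      show ((Equiv.prodCongr (Equiv.arrowCongr eA (Equiv.refl _))
        (Equiv.arrowCongr eB (Equiv.refl _))) p).2
      = (Equiv.arrowCongr eB (Equiv.refl _)) p.2 from rfl, h1, h2]
  -- step 3 : sigma
  have e3 := prodSubtypeSigmaEquiv
    (P := fun a : Fin s → (Fin m → F) => finrank F (span F (Set.range a)) = r)
    (Q := fun a (b : Fin (n - s) → (Fin m → F)) =>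
      finrank F ↥(span F (Set.range a) ⊔ span F (Set.range b)) = j)
  haveI : Fintype {a : Fin s → (Fin m → F) // finrank F (span F (Set.range a)) = r} :=
    Fintype.ofFinite _
  -- fiber count
  have hfib : ∀ x : {a : Fin s → (Fin m → F) // finrank F (span F (Set.range a)) = r},
      (Nat.card {b : Fin (n - s) → (Fin m → F) //
          finrank F ↥(span F (Set.range x.1) ⊔ span F (Set.range b)) = j} : ℝ)
        = (Fintype.card F : ℝ) ^ (r * (n - s))
          * Cq (Fintype.card F) (m - r) (n - s) (j - r) := by
    intro x
    have hW : finrank F ↥(span F (Set.range x.1)) = r := x.2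
    have hWle : finrank F ↥(span F (Set.range x.1)) ≤ j := by rw [hW]; exact hrj
    have hrel := card_rel (span F (Set.range x.1)) (n - s) j hWle
    rw [hW] at hrel
    rw [hrel]
    congr 1
    have hqd : finrank F (((Fin m → F)) ⧸ span F (Set.range x.1)) = m - r := by
      have h2 := Submodule.finrank_quotient_add_finrank (span F (Set.range x.1))
      rw [hW, hfrV] at h2
      omega
    rw [card_cnt (n - s) (j - r) hd2, hqd]
  -- full count
  have hcount : (Nat.card {H : Matrix (Fin m) (Fin n) F //
        H.rank = j ∧ (H.submatrix id cA).rank = r} : ℝ)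
      = Cq (Fintype.card F) m s r * ((Fintype.card F : ℝ) ^ (r * (n - s))
          * Cq (Fintype.card F) (m - r) (n - s) (j - r)) := by
    rw [Nat.card_congr (((e0.trans e1).trans e2).trans e3), nat_card_sigma, Nat.cast_sum]
    rw [Finset.sum_congr rfl fun x _ => hfib x, Finset.sum_const, Finset.card_univ,
      nsmul_eq_mul, ← Nat.card_eq_fintype_card]
    congr 1
    rw [card_cnt s r hrs, hfrV]
  rw [hcount]
  exact algebra_final hQ m n s j r hj hr1 hr2
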